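/- Let (K,v) be a henselian valued field, F ∈ K[x] monic irreducible of degree n, and [Φ_0, Φ_1, …, Φ_r] an Okutsu frame of F with degrees m_0 = 1 < m_1 < ⋯ < m_r < m_{r+1} = n. For 0 ≤ ℓ ≤ r, let V_{m_ℓ} = { v_F(f) : f ∈ K[x] monic of degree m_ℓ } and W_{m_{ℓ+1}} = { v_F(g)/deg(g) : g monic, 0 < deg(g) < m_{ℓ+1} }. Then W_{m_{ℓ+1}} has a maximal element if and only if V_{m_ℓ} has a maximal element. -/

import Mathlib

open Polynomial

section Preamble

variable {Λ : Type*} [AddCommGroup Λ] [LinearOrder Λ] [IsOrderedAddMonoid Λ]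

/-- A (Krull) valuation on a commutative ring, written additively, with value `⊤` at `0`. -/
def IsVal {R : Type*} [CommRing R] (μ : R → WithTop Λ) : Prop :=
  μ 0 = ⊤ ∧ μ 1 = 0 ∧ (∀ a b, μ (a * b) = μ a + μ b) ∧ ∀ a b, min (μ a) (μ b) ≤ μ (a + b)

variable {K : Type*} [Field K]

/-- `μ` is a valuation on `K[x]` whose restriction to `K` is `v`. -/
def ExtendsVal (v : K → WithTop Λ) (μ : Polynomial K → WithTop Λ) : Prop :=
  ∀ a : K, μ (Polynomial.C a) = v a

/-- `a ∼_μ b`: the initial terms of `a` and `b` in the graded algebra of `μ` coincide. -/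
def MuEquiv (μ : Polynomial K → WithTop Λ) (a b : Polynomial K) : Prop :=
  (μ a = μ b ∧ μ a < μ (a - b)) ∨ (μ a = ⊤ ∧ μ b = ⊤)

/-- `h ∣_μ g` : the initial term of `h` divides the initial term of `g` in the
graded algebra `G_μ`. -/
def MuDvd (μ : Polynomial K → WithTop Λ) (h g : Polynomial K) : Prop :=
  ∃ c, MuEquiv μ (h * c) g

/-- `g` is `μ`-minimal: `g ∤_μ f` for all nonzero `f` of degree smaller than `deg g`. -/
def MuMinimal (μ : Polynomial K → WithTop Λ) (g : Polynomial K) : Prop :=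
  ∀ f : Polynomial K, f ≠ 0 → f.degree < g.degree → ¬ MuDvd μ g f

/-- `g` is `μ`-irreducible: the principal ideal of `G_μ` generated by the initial term of `g`
is a nonzero prime ideal. -/
def MuIrreducible (μ : Polynomial K → WithTop Λ) (g : Polynomial K) : Prop :=
  μ g ≠ ⊤ ∧ ¬ MuDvd μ g 1 ∧ ∀ a b : Polynomial K, MuDvd μ g (a * b) → MuDvd μ g a ∨ MuDvd μ g b

/-- A (MacLane–Vaquié) key polynomial for `μ`: monic, `μ`-minimal and `μ`-irreducible. -/
def IsKeyPol (μ : Polynomial K → WithTop Λ) (φ : Polynomial K) : Prop :=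
  φ.Monic ∧ MuMinimal μ φ ∧ MuIrreducible μ φ

/-- A key polynomial for `μ` of minimal degree. -/
def MinKeyPol (μ : Polynomial K → WithTop Λ) (φ : Polynomial K) : Prop :=
  IsKeyPol μ φ ∧ ∀ ψ : Polynomial K, IsKeyPol μ ψ → φ.degree ≤ ψ.degree

/-- The coefficients of the `g`-adic expansion `f = ∑ a_s g^s`, `deg a_s < deg g`. -/
noncomputable def adicCoeff (g : Polynomial K) : Polynomial K → ℕ → Polynomial K
  | f, 0 => f %ₘ g
  | f, (s + 1) => adicCoeff g (f /ₘ g) s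

/-- The truncation `μ_g` of `μ` : `μ_g (∑ a_s g^s) = min_s μ (a_s g^s)`. -/
noncomputable def truncVal (μ : Polynomial K → WithTop Λ) (g f : Polynomial K) : WithTop Λ :=
  (Finset.range (f.natDegree + 1)).inf fun s => μ (adicCoeff g f s * g ^ s)

/-- The augmented valuation `[μ; φ, γ]`, acting on `φ`-expansions by
`ν(∑ a_s φ^s) = min_s (μ(a_s) + s γ)`. -/
noncomputable def augVal (μ : Polynomial K → WithTop Λ) (φ : Polynomial K) (γ : WithTop Λ)
    (f : Polynomial K) : WithTop Λ :=
  (Finset.range (f.natDegree + 1)).inf fun s => μ (adicCoeff φ f s) + s • γ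

end Preamble


section Helpers
variable {Λ : Type*} [AddCommGroup Λ] [LinearOrder Λ] [IsOrderedAddMonoid Λ]

lemma nsmul_mono_withTop {n : ℕ} {a b : WithTop Λ} (h : a ≤ b) : n • a ≤ n • b := by
  induction n with
  | zero => simp
  | succ k ih => rw [succ_nsmul, succ_nsmul]; exact add_le_add ih h

lemma nsmul_top_withTop {n : ℕ} (hn : 0 < n) : n • (⊤ : WithTop Λ) = ⊤ := by
  obtain ⟨k, rfl⟩ := Nat.exists_eq_succ_of_ne_zero hn.ne'
  rw [succ_nsmul, add_top]

lemma nsmul_coe_withTop (n : ℕ) (x : Λ) :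
    n • ((x : WithTop Λ)) = ((n • x : Λ) : WithTop Λ) := by
  induction n with
  | zero => simp
  | succ k ih => rw [succ_nsmul, succ_nsmul, ih, WithTop.coe_add]

lemma nsmul_cancel_withTop {n : ℕ} (hn : 0 < n) {a b : WithTop Λ} (h : n • a ≤ n • b) :
    a ≤ b := by
  induction b with
  | top => exact le_top
  | coe b =>
    induction a with
    | top =>
      exfalso
      rw [nsmul_top_withTop hn, nsmul_coe_withTop, top_le_iff] at h
      exact WithTop.coe_ne_top h
    | coe a =>
      rw [nsmul_coe_withTop, nsmul_coe_withTop, WithTop.coe_le_coe] at h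
      rw [WithTop.coe_le_coe]
      rcases le_or_gt a b with h' | h'
      · exact h'
      · exact absurd h (not_le.mpr (nsmul_lt_nsmul_right hn.ne' h'))

end Helpers

/-- let `[Φ_0, …, Φ_r]` be an Okutsu frame of a monic irreducible `F` of
degree `n` over a henselian field (with degrees `1 = m_0 < m_1 < ⋯ < m_{r+1} = n`).
Then, for `0 ≤ ℓ ≤ r`, the set `W_{m_{ℓ+1}} = { v_F(g)/deg g : g monic, 0 < deg g < m_{ℓ+1}}`
has a maximal element iff `V_{m_ℓ} = { v_F(f) : f monic of degree m_ℓ }` has a maximal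
element (weighted inequalities are stated by cross-multiplication). -/
theorem okutsu_frame_maxmax {K : Type*} [Field K] {Λ : Type*} [AddCommGroup Λ] [LinearOrder Λ] [IsOrderedAddMonoid Λ]
    (v : K → WithTop Λ) (hv : IsVal v)
    (vbar : AlgebraicClosure K → WithTop Λ) (hvbar : IsVal vbar)
    (hextbar : ∀ a : K, vbar (algebraMap K (AlgebraicClosure K) a) = v a)
    (hhens : ∀ w : AlgebraicClosure K → WithTop Λ, IsVal w →
      (∀ a : K, w (algebraMap K (AlgebraicClosure K) a) = v a) → w = vbar)
    (F : Polynomial K) (hFm : F.Monic) (hFirr : Irreducible F)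
    (θ : AlgebraicClosure K) (hθ : Polynomial.aeval θ F = 0)
    (r : ℕ) (Φ : ℕ → Set (Polynomial K)) (m : ℕ → ℕ)
    (hm0 : m 0 = 1) (hmlast : m (r + 1) = F.natDegree)
    (hmono : ∀ ℓ, ℓ ≤ r → m ℓ < m (ℓ + 1))
    (hne : ∀ ℓ, ℓ ≤ r → (Φ ℓ).Nonempty)
    (hpol : ∀ ℓ, ℓ ≤ r → ∀ φ ∈ Φ ℓ, φ.Monic ∧ Irreducible φ ∧ φ.natDegree = m ℓ)
    -- the fundamental property of Okutsu frames:
    (hfund : ∀ ℓ, ℓ ≤ r → ∀ g : Polynomial K, g.Monic → 0 < g.natDegree →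
      g.natDegree < m (ℓ + 1) → ∃ φ ∈ Φ ℓ,
        m ℓ • vbar (Polynomial.aeval θ g) ≤ g.natDegree • vbar (Polynomial.aeval θ φ))
    -- `Φ_ℓ` is a singleton whenever `W_{m_{ℓ+1}}` has a maximal element:
    (hsing : ∀ ℓ, ℓ ≤ r →
      (∃ g₀ : Polynomial K, g₀.Monic ∧ 0 < g₀.natDegree ∧ g₀.natDegree < m (ℓ + 1) ∧
        ∀ g : Polynomial K, g.Monic → 0 < g.natDegree → g.natDegree < m (ℓ + 1) →
          g₀.natDegree • vbar (Polynomial.aeval θ g) ≤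
            g.natDegree • vbar (Polynomial.aeval θ g₀)) →
      ∃ φ : Polynomial K, Φ ℓ = {φ}) :
    ∀ ℓ, ℓ ≤ r →
      ((∃ g₀ : Polynomial K, g₀.Monic ∧ 0 < g₀.natDegree ∧ g₀.natDegree < m (ℓ + 1) ∧
          ∀ g : Polynomial K, g.Monic → 0 < g.natDegree → g.natDegree < m (ℓ + 1) →
            g₀.natDegree • vbar (Polynomial.aeval θ g) ≤
              g.natDegree • vbar (Polynomial.aeval θ g₀)) ↔
        (∃ f₀ : Polynomial K, f₀.Monic ∧ f₀.natDegree = m ℓ ∧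
          ∀ f : Polynomial K, f.Monic → f.natDegree = m ℓ →
            vbar (Polynomial.aeval θ f) ≤ vbar (Polynomial.aeval θ f₀))) := by
  intro ℓ hℓ
  have hmpos : ∀ j, j ≤ r → 0 < m j := by
    intro j hj
    induction j with
    | zero => simp [hm0]
    | succ k ih =>
      have hk : k ≤ r := le_trans (Nat.le_succ k) hj
      exact lt_trans (ih hk) (hmono k hk)
  have hml : 0 < m ℓ := hmpos ℓ hℓ
  constructor
  · rintro hW
    obtain ⟨φ, hΦ⟩ := hsing ℓ hℓ hW
    have hφmem : φ ∈ Φ ℓ := by rw [hΦ]; rfl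
    obtain ⟨hφm, _, hφdeg⟩ := hpol ℓ hℓ φ hφmem
    refine ⟨φ, hφm, hφdeg, ?_⟩
    intro f hf hfdeg
    obtain ⟨ψ, hψmem, hψle⟩ := hfund ℓ hℓ f hf (hfdeg ▸ hml) (hfdeg ▸ hmono ℓ hℓ)
    rw [hΦ] at hψmem
    rw [Set.mem_singleton_iff] at hψmem
    subst hψmem
    rw [hfdeg] at hψle
    exact nsmul_cancel_withTop hml hψle
  · rintro ⟨f₀, hf₀m, hf₀deg, hf₀max⟩
    refine ⟨f₀, hf₀m, hf₀deg ▸ hml, hf₀deg ▸ hmono ℓ hℓ, ?_⟩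
    intro g hg hgpos hglt
    obtain ⟨φ, hφmem, hφle⟩ := hfund ℓ hℓ g hg hgpos hglt
    obtain ⟨hφm, _, hφdeg⟩ := hpol ℓ hℓ φ hφmem
    have h2 : vbar (Polynomial.aeval θ φ) ≤ vbar (Polynomial.aeval θ f₀) :=
      hf₀max φ hφm hφdeg
    calc f₀.natDegree • vbar (Polynomial.aeval θ g)
        = m ℓ • vbar (Polynomial.aeval θ g) := by rw [hf₀deg]
      _ ≤ g.natDegree • vbar (Polynomial.aeval θ φ) := hφle
      _ ≤ g.natDegree • vbar (Polynomial.aeval θ f₀) := nsmul_mono_withTop h2
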